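/- arXiv:2401.15353 — 2 statements merged into one kernel-verified Lean document; each statement's English description precedes it below -/
import Mathlib

section
/- The unitary U_α has propagation at most 1 with respect to the graph: for all (x,e) and (y,e') in X × E, if the inner product ⟨δ_{(y,e')}, U_α δ_{(x,e)}⟩ is nonzero, then either y = x, or there exists an edge f ∈ E with s(f) = x and t(f) = y. (This is the finite-propagation part of the lemma asserting that U_γ − 1 lies in the Roe algebra C*(X): the matrix entry (U_γ)_{yx} vanishes whenever x and y are distinct and not adjacent in the graph.) -/
/-- The unitary `U` implementing the flow map `F` on `ℓ²(X × E)` has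
propagation at most `1` with respect to the graph: for all `(x, e)` and `(y, e')` in
`X × E`, if the inner product `⟪δ_(y,e'), U δ_(x,e)⟫` is nonzero, then either `y = x`,
or there exists an edge `f ∈ E` with `s f = x` and `t f = y`. -/
theorem unitary_of_flow_map_propagation {X E : Type*} [Countable X] [Countable E]
    [DecidableEq X] [DecidableEq E]
    (s t : E → X)
    (α : ∀ x : X, {e : E // t e = x} ≃ {e : E // s e = x})
    (F : X × E → X × E)
    (hF₁ : ∀ (x : X) (e : E) (h : t e = x),
      F (x, e) = (t ((α x ⟨e, h⟩ : E)), ((α x ⟨e, h⟩ : E))))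
    (hF₂ : ∀ (x : X) (e : E), t e ≠ x → F (x, e) = (x, e))
    (U : lp (fun _ : X × E => ℂ) 2 ≃ₗᵢ[ℂ] lp (fun _ : X × E => ℂ) 2)
    (hU : ∀ p : X × E, U (lp.single 2 p (1 : ℂ)) = lp.single 2 (F p) (1 : ℂ)) :
    ∀ (x y : X) (e e' : E),
      (inner ℂ (lp.single 2 (y, e') (1 : ℂ)) (U (lp.single 2 (x, e) (1 : ℂ))) : ℂ) ≠ 0 →
      y = x ∨ ∃ f : E, s f = x ∧ t f = y := by
  intro x y e e' hne
  rw [hU, lp.inner_single_left, lp.single_apply] at hne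
  have hFy : F (x, e) = (y, e') := by
    by_contra h
    simp [Pi.single_apply, Ne.symm h] at hne
  by_cases h : t e = x
  · right
    rw [hF₁ x e h] at hFy
    exact ⟨(α x ⟨e, h⟩ : E), (α x ⟨e, h⟩).2, (Prod.ext_iff.mp hFy).1⟩
  · left
    rw [hF₂ x e h] at hFy
    exact ((Prod.ext_iff.mp hFy).1).symm
end

section
/- Assume that I(x) is finite for every vertex x (the graph is locally finite for incoming edges). Then for every finitely supported function f : X → ℂ, the operators (U_α − 1)∘M_f and M_f∘(U_α − 1) on ℓ²(X × E) have finite rank (hence are compact), where M_f is the bounded multiplication operator (M_f φ)(x,e) = f(x)·φ(x,e). (This expresses that U_γ − 1 is a locally compact operator, completing the proof that U_γ − 1 lies in the Roe algebra C*(X).) -/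
noncomputable def lpEval {ι : Type*} (q : ι) : lp (fun _ : ι => ℂ) 2 →L[ℂ] ℂ :=
  LinearMap.mkContinuous
    { toFun := fun φ => φ q
      map_add' := fun φ ψ => by simp [lp.coeFn_add]
      map_smul' := fun c φ => by simp [lp.coeFn_smul] }
    1 (fun φ => by
      rw [one_mul]; exact lp.norm_apply_le_norm (by norm_num : (2 : ENNReal) ≠ 0) φ q)

@[simp] lemma lpEval_apply {ι : Type*} (q : ι) (φ : lp (fun _ : ι => ℂ) 2) :
    lpEval q φ = φ q := rfl

lemma lpsingle_apply' {ι : Type*} [DecidableEq ι] (q r : ι) :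
    (lp.single (E := fun _ : ι => ℂ) 2 q (1 : ℂ)) r = if r = q then 1 else 0 := by
  by_cases h : r = q
  · subst h; simp [lp.single_apply_self]
  · simp [lp.single_apply_ne _ _ _ h, h]

lemma lp_mem_span_of_support {ι : Type*} [DecidableEq ι] (Q : Finset ι)
    (ψ : lp (fun _ : ι => ℂ) 2) (h : ∀ q, ψ q ≠ 0 → q ∈ Q) :
    ψ ∈ Submodule.span ℂ ((fun q => lp.single 2 q (1 : ℂ)) '' (Q : Set ι)) := by
  have hrep : ψ = ∑ q ∈ Q, (ψ q) • lp.single 2 q (1 : ℂ) := by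
    apply lp.ext
    funext r
    have : ((∑ q ∈ Q, (ψ q) • lp.single 2 q (1 : ℂ) : lp (fun _ : ι => ℂ) 2) : ι → ℂ) r
        = ∑ q ∈ Q, (ψ q) * (lp.single (E := fun _ : ι => ℂ) 2 q (1 : ℂ)) r := by
      rw [lp.coeFn_sum]
      simp [lp.coeFn_smul]
    rw [this]
    simp only [lpsingle_apply']
    rw [Finset.sum_congr rfl (fun q _ => by rw [mul_ite, mul_one, mul_zero])]
    rw [Finset.sum_ite_eq Q r (fun q => (ψ q : ℂ))]
    by_cases hr : r ∈ Q
    · simp [hr]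
    · simp only [hr, if_false]
      by_contra hne
      exact hr (h r hne)
  rw [hrep]
  exact Submodule.sum_mem _ (fun q hq =>
    Submodule.smul_mem _ _ (Submodule.subset_span ⟨q, hq, rfl⟩))

lemma isCompactOperator_of_mem_fd {H : Type*} [NormedAddCommGroup H] [NormedSpace ℂ H]
    (T : H →L[ℂ] H) (W : Submodule ℂ H) [FiniteDimensional ℂ W]
    (h : ∀ x, T x ∈ W) : IsCompactOperator T := by
  have : ProperSpace W := FiniteDimensional.proper ℂ W
  refine ⟨Subtype.val '' Metric.closedBall (0 : W) ‖T‖, ?_, ?_⟩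
  · exact (isCompact_closedBall (0 : W) ‖T‖).image continuous_subtype_val
  · refine Filter.mem_of_superset (Metric.closedBall_mem_nhds (0 : H) one_pos) ?_
    intro x hx
    refine ⟨⟨T x, h x⟩, ?_, rfl⟩
    simp only [Metric.mem_closedBall, dist_zero_right]
    calc ‖(⟨T x, h x⟩ : W)‖ = ‖T x‖ := rfl
      _ ≤ ‖T‖ * ‖x‖ := T.le_opNorm x
      _ ≤ ‖T‖ * 1 := by
          exact mul_le_mul_of_nonneg_left (by simpa [dist_zero_right] using hx) (norm_nonneg T)
      _ = ‖T‖ := mul_one _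

/-- Assume `I(x) = {e : t e = x}` is finite for every vertex `x`.
Then for every finitely supported `f : X → ℂ`, the operators `(U − 1) ∘ M_f` and
`M_f ∘ (U − 1)` on `ℓ²(X × E)` have finite rank (hence are compact), where `U` is
the unitary implementing the flow map `F` and `M_f` is the bounded multiplication
operator `(M_f φ) (x, e) = f x * φ (x, e)`. -/
theorem flow_unitary_sub_one_locally_compact {X E : Type*} [Countable X] [Countable E]
    [DecidableEq X] [DecidableEq E]
    (s t : E → X)
    (hloc : ∀ x : X, {e : E | t e = x}.Finite)
    (α : ∀ x : X, {e : E // t e = x} ≃ {e : E // s e = x})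
    (F : X × E → X × E)
    (hF₁ : ∀ (x : X) (e : E) (h : t e = x),
      F (x, e) = (t ((α x ⟨e, h⟩ : E)), ((α x ⟨e, h⟩ : E))))
    (hF₂ : ∀ (x : X) (e : E), t e ≠ x → F (x, e) = (x, e))
    (U : lp (fun _ : X × E => ℂ) 2 ≃ₗᵢ[ℂ] lp (fun _ : X × E => ℂ) 2)
    (hU : ∀ p : X × E, U (lp.single 2 p (1 : ℂ)) = lp.single 2 (F p) (1 : ℂ))
    (f : X → ℂ) (hf : (Function.support f).Finite)
    (M : lp (fun _ : X × E => ℂ) 2 →L[ℂ] lp (fun _ : X × E => ℂ) 2)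
    (hM : ∀ (φ : lp (fun _ : X × E => ℂ) 2) (p : X × E), (M φ) p = f p.1 * φ p) :
    (FiniteDimensional ℂ
        (LinearMap.range ((((U.toContinuousLinearEquiv :
            lp (fun _ : X × E => ℂ) 2 →L[ℂ] lp (fun _ : X × E => ℂ) 2) - 1) ∘L M) :
            lp (fun _ : X × E => ℂ) 2 →ₗ[ℂ] lp (fun _ : X × E => ℂ) 2)) ∧
      IsCompactOperator (((U.toContinuousLinearEquiv :
            lp (fun _ : X × E => ℂ) 2 →L[ℂ] lp (fun _ : X × E => ℂ) 2) - 1) ∘L M)) ∧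
    (FiniteDimensional ℂ
        (LinearMap.range ((M ∘L ((U.toContinuousLinearEquiv :
            lp (fun _ : X × E => ℂ) 2 →L[ℂ] lp (fun _ : X × E => ℂ) 2) - 1)) :
            lp (fun _ : X × E => ℂ) 2 →ₗ[ℂ] lp (fun _ : X × E => ℂ) 2)) ∧
      IsCompactOperator (M ∘L ((U.toContinuousLinearEquiv :
            lp (fun _ : X × E => ℂ) 2 →L[ℂ] lp (fun _ : X × E => ℂ) 2) - 1))) := by
  classical
  set H := lp (fun _ : X × E => ℂ) 2 with hH
  -- injectivity of singles
  have hsingle_inj : Function.Injective (fun p : X × E => lp.single (E := fun _ : X × E => ℂ) 2 p (1 : ℂ)) := by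
    intro p p' hpp'
    by_contra hne
    have := congrArg (fun ψ : H => (ψ : (X × E) → ℂ) p) hpp'
    simp only [lpsingle_apply', if_pos rfl, if_neg hne] at this
    · exact one_ne_zero this
  -- F is bijective
  have hFinj : Function.Injective F := by
    intro p p' h
    apply hsingle_inj
    apply U.injective
    simp only [hU]
    exact congrArg (fun q => lp.single (E := fun _ : X × E => ℂ) 2 q (1 : ℂ)) h
  have hFsurj : Function.Surjective F := by
    rintro ⟨x, e⟩
    by_cases h : t e = x
    · subst h
      set e₀ : {e' : E // t e' = s e} := (α (s e)).symm ⟨e, rfl⟩ with he₀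
      refine ⟨(s e, (e₀ : E)), ?_⟩
      have h1 : F (s e, (e₀ : E)) = (t ((α (s e) ⟨(e₀ : E), e₀.2⟩ : E)), ((α (s e) ⟨(e₀ : E), e₀.2⟩ : E))) :=
        hF₁ (s e) (e₀ : E) e₀.2
      have h2 : (⟨(e₀ : E), e₀.2⟩ : {e' : E // t e' = s e}) = e₀ := rfl
      rw [h2, he₀, Equiv.apply_symm_apply] at h1
      exact h1
    · exact ⟨(x, e), hF₂ x e h⟩
  have hFbij : Function.Bijective F := ⟨hFinj, hFsurj⟩
  set Geq : (X × E) ≃ (X × E) := Equiv.ofBijective F hFbij with hGeq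
  set G : X × E → X × E := (Geq.symm : (X × E) → (X × E)) with hG
  have hFG : ∀ q, F (G q) = q := fun q => Geq.apply_symm_apply q
  have hGF : ∀ p, G (F p) = p := fun p => Geq.symm_apply_apply p
  have hcoe : ∀ ψ : H, (U.toContinuousLinearEquiv : H →L[ℂ] H) ψ = U ψ := fun ψ => by
    simp [LinearIsometryEquiv.coe_toContinuousLinearEquiv]
  -- pointwise formula for U
  have hUapply : ∀ (φ : H) (q : X × E), (U φ : (X × E) → ℂ) q = φ (G q) := by
    intro φ q
    have h1 : HasSum (fun p : X × E => lp.single (E := fun _ : X × E => ℂ) 2 p (φ p)) φ :=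
      lp.hasSum_single (by norm_num) φ
    have h2 : HasSum (fun p : X × E => lpEval q ((U.toContinuousLinearEquiv : H →L[ℂ] H)
        (lp.single (E := fun _ : X × E => ℂ) 2 p (φ p)))) (lpEval q ((U.toContinuousLinearEquiv : H →L[ℂ] H) φ)) :=
      (h1.mapL (U.toContinuousLinearEquiv : H →L[ℂ] H)).mapL (lpEval q)
    have hsingle_smul : ∀ p : X × E, lp.single (E := fun _ : X × E => ℂ) 2 p (φ p)
        = (φ p : ℂ) • lp.single (E := fun _ : X × E => ℂ) 2 p (1 : ℂ) := by
      intro p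
      rw [← lp.single_smul]
      norm_num
    have h3 : ∀ p : X × E, lpEval q ((U.toContinuousLinearEquiv : H →L[ℂ] H)
        (lp.single (E := fun _ : X × E => ℂ) 2 p (φ p))) = if p = G q then φ (G q) else 0 := by
      intro p
      rw [hsingle_smul p, map_smul, map_smul, lpEval_apply, hcoe, hU p]
      rw [smul_eq_mul, lpsingle_apply']
      by_cases hpq : p = G q
      · subst hpq
        rw [if_pos (hFG q).symm, if_pos rfl, mul_one]
      · have : q ≠ F p := by
          intro hq
          exact hpq (by rw [hq, hGF])
        rw [if_neg this, if_neg hpq, mul_zero]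
    rw [funext h3] at h2
    have h4 : HasSum (fun p : X × E => if p = G q then (φ (G q) : ℂ) else 0) (φ (G q)) :=
      hasSum_ite_eq (G q) (φ (G q))
    have := h2.unique h4
    rw [lpEval_apply, hcoe] at this
    exact this
  -- fixed-point structure
  have hGne : ∀ q : X × E, G q ≠ q → t (G q).2 = (G q).1 ∧ t q.2 = q.1 := by
    intro q hq
    have h1 : t (G q).2 = (G q).1 := by
      by_contra h
      have := hF₂ (G q).1 (G q).2 h
      rw [Prod.mk.eta] at this
      exact hq (((hFG q).symm.trans this).symm)
    refine ⟨h1, ?_⟩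
    have h2 := hF₁ (G q).1 (G q).2 h1
    rw [Prod.mk.eta, hFG q] at h2
    rw [h2]
  -- the finite set
  set Sset : Set (X × E) := {p | f p.1 ≠ 0 ∧ t p.2 = p.1} with hSset
  have hS : Sset.Finite := by
    have : Sset ⊆ ⋃ x ∈ Function.support f, ({x} ×ˢ {e : E | t e = x}) := by
      rintro ⟨x, e⟩ ⟨h1, h2⟩
      exact Set.mem_biUnion h1 ⟨rfl, h2⟩
    exact Set.Finite.subset (hf.biUnion (fun x _ => (Set.finite_singleton x).prod (hloc x))) this
  set Q : Set (X × E) := Sset ∪ F '' Sset with hQdef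
  have hQ : Q.Finite := hS.union (hS.image F)
  set W : Submodule ℂ H := Submodule.span ℂ ((fun q => lp.single (E := fun _ : X × E => ℂ) 2 q (1 : ℂ)) '' (hQ.toFinset : Set (X × E))) with hW
  have hWfd : FiniteDimensional ℂ W :=
    FiniteDimensional.span_of_finite ℂ ((hQ.toFinset.finite_toSet).image _)
  set T₁ : H →L[ℂ] H := ((U.toContinuousLinearEquiv : H →L[ℂ] H) - 1) ∘L M with hT₁def
  set T₂ : H →L[ℂ] H := M ∘L ((U.toContinuousLinearEquiv : H →L[ℂ] H) - 1) with hT₂def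
  -- pointwise formulas
  have hT₁apply : ∀ (φ : H) (q : X × E), (T₁ φ : (X × E) → ℂ) q
      = f (G q).1 * φ (G q) - f q.1 * φ q := by
    intro φ q
    have : (T₁ φ : (X × E) → ℂ) q = (U (M φ) : (X × E) → ℂ) q - (M φ : (X × E) → ℂ) q := by
      simp [hT₁def, ContinuousLinearMap.sub_apply, lp.coeFn_sub,
        LinearIsometryEquiv.coe_toContinuousLinearEquiv]
    rw [this, hUapply, hM, hM]
  have hT₂apply : ∀ (φ : H) (q : X × E), (T₂ φ : (X × E) → ℂ) q
      = f q.1 * (φ (G q) - φ q) := by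
    intro φ q
    have : (T₂ φ : (X × E) → ℂ) q = f q.1 * ((U φ : (X × E) → ℂ) q - φ q) := by
      rw [hT₂def]
      simp only [ContinuousLinearMap.coe_comp', Function.comp_apply]
      rw [hM]
      simp [ContinuousLinearMap.sub_apply, lp.coeFn_sub,
        LinearIsometryEquiv.coe_toContinuousLinearEquiv]
    rw [this, hUapply]
  -- support claims
  have hsupp₁ : ∀ (φ : H) (q : X × E), (T₁ φ : (X × E) → ℂ) q ≠ 0 → q ∈ hQ.toFinset := by
    intro φ q hne
    rw [hT₁apply] at hne
    have hGq : G q ≠ q := by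
      intro h; rw [h, sub_self] at hne; exact hne rfl
    obtain ⟨h1, h2⟩ := hGne q hGq
    rw [Set.Finite.mem_toFinset]
    by_cases hfq : f q.1 = 0
    · have hfG : f (G q).1 ≠ 0 := by
        intro h; rw [h, hfq] at hne; simp at hne
      exact Or.inr ⟨G q, ⟨hfG, h1⟩, hFG q⟩
    · exact Or.inl ⟨hfq, h2⟩
  have hsupp₂ : ∀ (φ : H) (q : X × E), (T₂ φ : (X × E) → ℂ) q ≠ 0 → q ∈ hQ.toFinset := by
    intro φ q hne
    rw [hT₂apply] at hne
    have hfq : f q.1 ≠ 0 := fun h => hne (by rw [h, zero_mul])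
    have hGq : G q ≠ q := by
      intro h; rw [h, sub_self, mul_zero] at hne; exact hne rfl
    rw [Set.Finite.mem_toFinset]
    exact Or.inl ⟨hfq, (hGne q hGq).2⟩
  -- conclude
  have hmem₁ : ∀ φ : H, T₁ φ ∈ W := fun φ =>
    lp_mem_span_of_support hQ.toFinset (T₁ φ) (hsupp₁ φ)
  have hmem₂ : ∀ φ : H, T₂ φ ∈ W := fun φ =>
    lp_mem_span_of_support hQ.toFinset (T₂ φ) (hsupp₂ φ)
  have hle₁ : LinearMap.range (T₁ : H →ₗ[ℂ] H) ≤ W := by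
    rintro y ⟨φ, rfl⟩; exact hmem₁ φ
  have hle₂ : LinearMap.range (T₂ : H →ₗ[ℂ] H) ≤ W := by
    rintro y ⟨φ, rfl⟩; exact hmem₂ φ
  exact ⟨⟨Submodule.finiteDimensional_of_le hle₁,
      isCompactOperator_of_mem_fd T₁ W hmem₁⟩,
    ⟨Submodule.finiteDimensional_of_le hle₂,
      isCompactOperator_of_mem_fd T₂ W hmem₂⟩⟩
end
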